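/- Let A ∈ ℝ^{n×n} be symmetric and tridiagonal. Then for every 1 ≤ k < n, the off-diagonal blocks (A·(I + A²)⁻¹)(1:k, k+1:n) and (A·(I + A²)⁻¹)(k+1:n, 1:k) have rank at most 2. -/

import Mathlib

open Matrix

/-- The upper off-diagonal block `M(1:k, k+1:n)` of a square matrix. -/
def offUpper {α : Type*} {n : ℕ} (M : Matrix (Fin n) (Fin n) α) (k : ℕ) (hk : k < n) :
    Matrix (Fin k) (Fin (n - k)) α :=
  M.submatrix (fun i => ⟨i.1, i.2.trans hk⟩) (fun j => ⟨k + j.1, by omega⟩)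

/-- The lower off-diagonal block `M(k+1:n, 1:k)` of a square matrix. -/
def offLower {α : Type*} {n : ℕ} (M : Matrix (Fin n) (Fin n) α) (k : ℕ) (hk : k < n) :
    Matrix (Fin (n - k)) (Fin k) α :=
  M.submatrix (fun i => ⟨k + i.1, by omega⟩) (fun j => ⟨j.1, j.2.trans hk⟩)

section Aux

/-- embedding of the first `k` indices -/
def embL {n : ℕ} (k : ℕ) (hk : k < n) : Fin k → Fin n := fun i => ⟨i.1, i.2.trans hk⟩

/-- embedding of the last `n - k` indices -/
def embR {n : ℕ} (k : ℕ) (hk : k < n) : Fin (n - k) → Fin n := fun j => ⟨k + j.1, by omega⟩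

lemma offUpper_eq {α : Type*} {n : ℕ} (M : Matrix (Fin n) (Fin n) α) (k : ℕ) (hk : k < n) :
    offUpper M k hk = M.submatrix (embL k hk) (embR k hk) := rfl

lemma offLower_eq {α : Type*} {n : ℕ} (M : Matrix (Fin n) (Fin n) α) (k : ℕ) (hk : k < n) :
    offLower M k hk = M.submatrix (embR k hk) (embL k hk) := rfl

lemma sum_split {n k : ℕ} (hk : k < n) (f : Fin n → ℝ) :
    ∑ l, f l = (∑ i : Fin k, f (embL k hk i)) + ∑ j : Fin (n - k), f (embR k hk j) := by
  have h : k + (n - k) = n := by omega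
  rw [← Equiv.sum_comp (finCongr h) f, Fin.sum_univ_add]
  rfl

lemma offUpper_mul {n k : ℕ} (hk : k < n) (X Y : Matrix (Fin n) (Fin n) ℝ) :
    offUpper (X * Y) k hk =
      X.submatrix (embL k hk) (embL k hk) * offUpper Y k hk +
        offUpper X k hk * Y.submatrix (embR k hk) (embR k hk) := by
  ext i j
  simp only [offUpper, submatrix_apply, Matrix.add_apply, Matrix.mul_apply]
  rw [sum_split hk]
  rfl

lemma rank_add_le' {m p : Type*} [Fintype m] [Fintype p] [DecidableEq p]
    (X Y : Matrix m p ℝ) : (X + Y).rank ≤ X.rank + Y.rank := by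
  rw [Matrix.rank, Matrix.rank, Matrix.rank, Matrix.mulVecLin_add]
  have hle : LinearMap.range (X.mulVecLin + Y.mulVecLin) ≤
      LinearMap.range X.mulVecLin ⊔ LinearMap.range Y.mulVecLin := by
    rintro _ ⟨x, rfl⟩
    exact Submodule.mem_sup.2 ⟨_, ⟨x, rfl⟩, _, ⟨x, rfl⟩, rfl⟩
  exact (Submodule.finrank_mono hle).trans
    (Submodule.finrank_add_le_finrank_add_finrank _ _)

lemma rank_vecMulVec_le {m p : Type*} [Fintype m] [Fintype p] [DecidableEq p]
    (u : m → ℝ) (w : p → ℝ) : (vecMulVec u w).rank ≤ 1 := by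
  rw [vecMulVec_eq Unit u w]
  exact (Matrix.rank_mul_le_right _ _).trans
    ((Matrix.rank_le_card_height _).trans (by simp))

lemma mul_vecMulVec' {l m p : Type*} [Fintype m]
    (X : Matrix l m ℝ) (u : m → ℝ) (w : p → ℝ) :
    X * vecMulVec u w = vecMulVec (X *ᵥ u) w := by
  ext i j
  simp only [Matrix.mul_apply, vecMulVec_apply, Matrix.mulVec, dotProduct]
  rw [Finset.sum_mul]
  exact Finset.sum_congr rfl fun l _ => by ring

lemma vecMulVec_mul' {l m p : Type*} [Fintype m]
    (u : l → ℝ) (w : m → ℝ) (Y : Matrix m p ℝ) :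
    vecMulVec u w * Y = vecMulVec u (w ᵥ* Y) := by
  ext i j
  simp only [Matrix.mul_apply, vecMulVec_apply, Matrix.vecMul, dotProduct]
  rw [Finset.mul_sum]
  exact Finset.sum_congr rfl fun l _ => by ring

end Aux

/-- For a symmetric tridiagonal `A ∈ ℝ^{n×n}` and every `1 ≤ k < n`, the
off-diagonal blocks of `A (I + A²)⁻¹` have rank at most `2`. -/
theorem offdiag_rank_tridiagonal_product {n : ℕ} (A : Matrix (Fin n) (Fin n) ℝ)
    (hsymm : Aᵀ = A)
    (htri : ∀ i j : Fin n, (1 : ℤ) < |(i : ℤ) - (j : ℤ)| → A i j = 0)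
    (k : ℕ) (hk1 : 1 ≤ k) (hkn : k < n) :
    (offUpper (A * (1 + A ^ 2)⁻¹) k hkn).rank ≤ 2 ∧
    (offLower (A * (1 + A ^ 2)⁻¹) k hkn).rank ≤ 2 := by
  classical
  set P : Matrix (Fin n) (Fin n) ℝ := 1 + A ^ 2 with hPdef
  set M : Matrix (Fin n) (Fin n) ℝ := A * P⁻¹ with hMdef
  -- positive definiteness of P
  have hA2 : (A ^ 2).PosSemidef := by
    have h := Matrix.posSemidef_conjTranspose_mul_self A
    have hAH : Aᴴ = A := by
      ext i j
      simp only [Matrix.conjTranspose_apply, star_trivial]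
      conv_rhs => rw [← hsymm]
      rfl
    rwa [hAH, ← pow_two] at h
  have hP : P.PosDef := Matrix.PosDef.add_posSemidef Matrix.PosDef.one hA2
  have hPdet : IsUnit P.det := hP.det_pos.ne'.isUnit
  -- commutation
  have hcomm : P * A = A * P := by
    simp only [hPdef]
    noncomm_ring
  have hPM : P * M = A := by
    rw [hMdef, ← Matrix.mul_assoc, hcomm, Matrix.mul_assoc,
      Matrix.mul_nonsing_inv _ hPdet, Matrix.mul_one]
  -- M is symmetric
  have hMsymm : Mᵀ = M := by
    have hPT : Pᵀ = P := by
      simp only [hPdef, Matrix.transpose_add, Matrix.transpose_one, Matrix.transpose_pow, hsymm]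
    have h1 : Mᵀ = P⁻¹ * A := by
      rw [hMdef, Matrix.transpose_mul, Matrix.transpose_nonsing_inv, hPT, hsymm]
    have h2 : P⁻¹ * A = A * P⁻¹ := by
      calc P⁻¹ * A = P⁻¹ * A * (P * P⁻¹) := by
            rw [Matrix.mul_nonsing_inv _ hPdet, Matrix.mul_one]
        _ = P⁻¹ * (A * P) * P⁻¹ := by
            simp only [Matrix.mul_assoc]
        _ = P⁻¹ * (P * A) * P⁻¹ := by rw [hcomm]
        _ = A * P⁻¹ := by
            simp only [← Matrix.mul_assoc]
            rw [Matrix.nonsing_inv_mul _ hPdet, Matrix.one_mul]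
    rw [h1, h2, hMdef]
  -- the rank-one structure of offUpper A
  have hk1n : k - 1 < n := by omega
  have hkn' : k < n := hkn
  set c : ℝ := A ⟨k - 1, hk1n⟩ ⟨k, hkn'⟩ with hcdef
  set u : Fin k → ℝ := fun i => if i.1 = k - 1 then c else 0 with hudef
  set w : Fin (n - k) → ℝ := fun j => if j.1 = 0 then 1 else 0 with hwdef
  have habs : ∀ (i : Fin k) (j : Fin (n - k)), ¬(i.1 = k - 1 ∧ j.1 = 0) →
      A ⟨i.1, i.2.trans hkn⟩ ⟨k + j.1, by omega⟩ = 0 := by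
    intro i j hnot
    apply htri
    have e1 : ((⟨i.1, i.2.trans hkn⟩ : Fin n) : ℤ) = (i.1 : ℤ) := rfl
    have e2 : ((⟨k + j.1, by omega⟩ : Fin n) : ℤ) = ((k + j.1 : ℕ) : ℤ) := rfl
    rw [e1, e2]
    have hiv : i.1 < k := i.2
    have h2 : (1 : ℤ) < ((k + j.1 : ℕ) : ℤ) - (i.1 : ℤ) := by
      rcases Decidable.not_and_iff_or_not.mp hnot with h | h
      · push_cast; omega
      · push_cast; omega
    calc (1 : ℤ) < ((k + j.1 : ℕ) : ℤ) - (i.1 : ℤ) := h2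
      _ ≤ |((k + j.1 : ℕ) : ℤ) - (i.1 : ℤ)| := le_abs_self _
      _ = |(i.1 : ℤ) - ((k + j.1 : ℕ) : ℤ)| := abs_sub_comm _ _
  have hoffA : offUpper A k hkn = vecMulVec u w := by
    ext i j
    simp only [offUpper, submatrix_apply, vecMulVec_apply, hudef, hwdef]
    by_cases hi : i.1 = k - 1
    · by_cases hj : j.1 = 0
      · rw [if_pos hi, if_pos hj, mul_one]
        have h1 : (⟨i.1, i.2.trans hkn⟩ : Fin n) = ⟨k - 1, hk1n⟩ :=
          Fin.ext (show i.1 = k - 1 from hi)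
        have h2 : (⟨k + j.1, by omega⟩ : Fin n) = ⟨k, hkn'⟩ :=
          Fin.ext (show k + j.1 = k by omega)
        rw [h1, h2]
      · rw [if_neg hj, mul_zero]
        exact habs i j (fun hh => hj hh.2)
    · rw [if_neg hi, zero_mul]
      exact habs i j (fun hh => hi hh.1)
  -- 1-submatrices
  have hsub1 : (1 : Matrix (Fin n) (Fin n) ℝ).submatrix (embL k hkn) (embR k hkn) = 0 := by
    ext i j
    simp only [submatrix_apply, Matrix.zero_apply]
    apply Matrix.one_apply_ne
    intro h
    have h' : i.1 = k + j.1 := congrArg Fin.val h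
    have : i.1 < k := i.2
    omega
  have hsub2 : (1 : Matrix (Fin n) (Fin n) ℝ).submatrix (embL k hkn) (embL k hkn) =
      (1 : Matrix (Fin k) (Fin k) ℝ) := by
    ext i j
    simp only [submatrix_apply, Matrix.one_apply]
    by_cases h : i = j
    · simp [h]
    · have hne : embL k hkn i ≠ embL k hkn j := by
        intro hh
        apply h
        have h2 := congrArg Fin.val hh
        exact Fin.ext h2
      simp [h, hne]
  -- positive definiteness of the upper-left block of P
  have hblkPpos : (P.submatrix (embL k hkn) (embL k hkn)).PosDef := by
    have h1 : P.submatrix (embL k hkn) (embL k hkn) =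
        (A ^ 2).submatrix (embL k hkn) (embL k hkn) + 1 := by
      rw [hPdef]
      simp only [Matrix.submatrix_add, Pi.add_apply, hsub2]
      rw [add_comm]
    rw [h1]
    exact Matrix.PosDef.posSemidef_add (hA2.submatrix _) Matrix.PosDef.one
  have hblkPdet : IsUnit (P.submatrix (embL k hkn) (embL k hkn)).det :=
    hblkPpos.det_pos.ne'.isUnit
  -- offUpper of P
  have hoffP : offUpper P k hkn =
      vecMulVec (A.submatrix (embL k hkn) (embL k hkn) *ᵥ u) w +
        vecMulVec u (w ᵥ* A.submatrix (embR k hkn) (embR k hkn)) := by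
    have h2 := offUpper_mul hkn A A
    rw [hoffA, mul_vecMulVec', vecMulVec_mul'] at h2
    have h0 : offUpper P k hkn = offUpper (A * A) k hkn := by
      rw [offUpper_eq, hPdef]
      simp only [Matrix.submatrix_add, Pi.add_apply, hsub1, zero_add]
      rw [offUpper_eq, pow_two]
    rw [h0, h2]
  -- the key equation
  have hkey : P.submatrix (embL k hkn) (embL k hkn) * offUpper M k hkn =
      vecMulVec u (w - (w ᵥ* A.submatrix (embR k hkn) (embR k hkn)) ᵥ*
          M.submatrix (embR k hkn) (embR k hkn)) +
        vecMulVec (A.submatrix (embL k hkn) (embL k hkn) *ᵥ u)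
          (-(w ᵥ* M.submatrix (embR k hkn) (embR k hkn))) := by
    have h0 := offUpper_mul hkn P M
    rw [hPM] at h0
    have h1 : P.submatrix (embL k hkn) (embL k hkn) * offUpper M k hkn =
        offUpper A k hkn -
          offUpper P k hkn * M.submatrix (embR k hkn) (embR k hkn) :=
      eq_sub_of_add_eq h0.symm
    rw [h1, hoffA, hoffP, Matrix.add_mul, vecMulVec_mul', vecMulVec_mul']
    ext i j
    simp only [vecMulVec_apply, Matrix.sub_apply, Matrix.add_apply, Pi.sub_apply, Pi.neg_apply]
    ring
  -- upper bound on the rank of offUpper M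
  have hupper : (offUpper M k hkn).rank ≤ 2 := by
    have heq : offUpper M k hkn =
        (P.submatrix (embL k hkn) (embL k hkn))⁻¹ *
          (P.submatrix (embL k hkn) (embL k hkn) * offUpper M k hkn) := by
      rw [← Matrix.mul_assoc, Matrix.nonsing_inv_mul _ hblkPdet, Matrix.one_mul]
    calc (offUpper M k hkn).rank
        ≤ (P.submatrix (embL k hkn) (embL k hkn) * offUpper M k hkn).rank := by
          conv_lhs => rw [heq]
          exact Matrix.rank_mul_le_right _ _
      _ ≤ 1 + 1 := by
          rw [hkey]
          exact (rank_add_le' _ _).trans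
            (add_le_add (_root_.rank_vecMulVec_le _ _) (_root_.rank_vecMulVec_le _ _))
      _ = 2 := rfl
  refine ⟨hupper, ?_⟩
  -- the lower block is the transpose of the upper block
  have hlow : offLower M k hkn = (offUpper M k hkn)ᵀ := by
    ext i j
    simp only [offLower, offUpper, submatrix_apply, Matrix.transpose_apply]
    conv_lhs => rw [← hMsymm]
    rfl
  rw [hlow, Matrix.rank_transpose]
  exact hupper
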